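/- Under Assumptions A1, A2 and the cone condition A4 on A ⊂ ℝ^ℓ with Leb(A) > 0, there exist positive constants κ1, κ2, independent of λ, such that for all sufficiently small λ > 0 and every t ∈ 𝕋\{T}: sup_{u∈W} |H(α^λ_t(u))| ≤ κ1 + κ2 |ln λ| + ℓ ln(1 + sup_{u∈W} |V^λ(t+1,u)|), where α^λ is the Gibbs-form optimal regularized control and V^λ the regularized value function. -/

import Mathlib

set_option maxHeartbeats 1600000
open MeasureTheory Filter Topology
open scoped NNReal ENNReal

/-- Borel subprobability measures on `E` with the topology of weak convergence. -/
abbrev SubProb (E : Type*) [MeasurableSpace E] : Type _ :=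
  {μ : FiniteMeasure E // μ Set.univ ≤ 1}

/-- Assumption A4 (cone condition) for a set `A ⊆ ℝ^ℓ`: there are `ϑ > 0` and `ι ∈ (0,π/2]`
such that every `a ∈ A` is the vertex of a cone of angle `ι` whose intersection with the
ball `B_ϑ(a)` lies in `A` (for `ℓ = 1` the cone is a half-line, so this reduces to
`[a-ϑ,a] ⊆ A` or `[a,a+ϑ] ⊆ A`). -/
def ConeCondition {l : ℕ} (Aset : Set (EuclideanSpace ℝ (Fin l))) : Prop :=
  ∃ θ : ℝ, 0 < θ ∧ ∃ ι : ℝ, 0 < ι ∧ ι ≤ Real.pi / 2 ∧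
    ∀ a ∈ Aset, ∃ v : EuclideanSpace ℝ (Fin l), ‖v‖ = 1 ∧
      {x : EuclideanSpace ℝ (Fin l) |
        dist x a < θ ∧ ‖x - a‖ * Real.cos ι ≤ (inner ℝ (x - a) v : ℝ)} ⊆ Aset

section Regularized

variable {l : ℕ} {S W S0 : Type*}
variable [MetricSpace S] [CompactSpace S] [Nonempty S]
  [MeasurableSpace S] [BorelSpace S] [SecondCountableTopology S]
variable [Fintype W] [Nonempty W]
variable (T : ℕ) (Aset : Set (EuclideanSpace ℝ (Fin l)))
variable (Ψ : ℕ → W → S0)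
variable (f0 : ℕ → S0 → EuclideanSpace ℝ (Fin l) → SubProb S → ℝ)
variable (P0 : ℕ → W → EuclideanSpace ℝ (Fin l) → SubProb S → W → ℝ)
variable (g0 : S0 → SubProb S → ℝ)
variable (μT : W → SubProb S) (m : ℕ → W → SubProb S)

/-- `Vaux λ j u` is the regularized value function `V^λ(T-j, u)`, defined by backward
induction (`j` = number of remaining periods) via the explicit log-integral form of the
entropy-regularized dynamic programming equation:
`V^λ(t,u) = λ ln ∫_A exp((f⁰_t(Ψ_t(u),a,m_t(u)) + Σ_{u'} V^λ(t+1,u') P⁰_{t+1}(u,a,m_t(u),u'))/λ) da`,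
with terminal value `V^λ(T,u) = g⁰(Ψ_T(u),μ_T(u))`. -/
noncomputable def Vaux (lam : ℝ) : ℕ → W → ℝ
  | 0, u => g0 (Ψ T u) (μT u)
  | (j + 1), u =>
      lam * Real.log (∫ a in Aset,
        Real.exp ((f0 (T - (j + 1)) (Ψ (T - (j + 1)) u) a (m (T - (j + 1)) u)
          + ∑ u' : W, Vaux lam j u' * P0 (T - (j + 1)) u a (m (T - (j + 1)) u) u') / lam))

/-- The regularized value function `V^λ(t,u)` at calendar time `t`. -/
noncomputable def Vlam (lam : ℝ) (t : ℕ) (u : W) : ℝ :=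
  Vaux T Aset Ψ f0 P0 g0 μT m lam (T - t) u

/-- The Gibbs exponent
`G^λ_t(u,a) = f⁰_t(Ψ_t(u),a,m_t(u)) + Σ_{u'} V^λ(t+1,u') P⁰_{t+1}(u,a,m_t(u),u')`. -/
noncomputable def Gexp (lam : ℝ) (t : ℕ) (u : W) (a : EuclideanSpace ℝ (Fin l)) : ℝ :=
  f0 t (Ψ t u) a (m t u)
    + ∑ u' : W, Vlam T Aset Ψ f0 P0 g0 μT m lam (t + 1) u' * P0 t u a (m t u) u'

/-- The Gibbs-form optimal regularized control: the density on `A`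
`α^λ_t(u)(a) = exp(G^λ_t(u,a)/λ) / ∫_A exp(G^λ_t(u,a')/λ) da'`. -/
noncomputable def gibbsDensity (lam : ℝ) (t : ℕ) (u : W) (a : EuclideanSpace ℝ (Fin l)) : ℝ :=
  Real.exp (Gexp T Aset Ψ f0 P0 g0 μT m lam t u a / lam) /
    ∫ a' in Aset, Real.exp (Gexp T Aset Ψ f0 P0 g0 μT m lam t u a' / lam)

/-- The (differential) Shannon entropy of the Gibbs density:
`H(α^λ_t(u)) = -∫_A α^λ_t(u)(a) ln α^λ_t(u)(a) da`. -/
noncomputable def entGibbs (lam : ℝ) (t : ℕ) (u : W) : ℝ :=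
  -∫ a in Aset, gibbsDensity T Aset Ψ f0 P0 g0 μT m lam t u a *
      Real.log (gibbsDensity T Aset Ψ f0 P0 g0 μT m lam t u a)

end Regularized

/-- Under Assumptions A1, A2 and the cone condition A4 on the compact action
set `A ⊂ ℝ^ℓ` with `Leb(A) > 0`, there exist positive constants `κ₁, κ₂` independent of
`λ` such that for all sufficiently small `λ > 0` and every `t ∈ 𝕋\{T}`:
`sup_{u∈W} |H(α^λ_t(u))| ≤ κ₁ + κ₂ |ln λ| + ℓ ln(1 + sup_{u∈W} |V^λ(t+1,u)|)`. -/
theorem entropy_of_gibbs_control_bound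
    {l : ℕ} {S W S0 : Type*}
    [MetricSpace S] [CompactSpace S] [Nonempty S]
    [MeasurableSpace S] [BorelSpace S] [SecondCountableTopology S]
    [Fintype W] [Nonempty W] [Fintype S0]
    (T : ℕ)
    (Aset : Set (EuclideanSpace ℝ (Fin l)))
    (hAcompact : IsCompact Aset) (hAne : Aset.Nonempty)
    (hALeb : 0 < MeasureTheory.volume Aset)
    (hAcone : ConeCondition Aset)
    (Ψ : ℕ → W → S0)
    (f0 : ℕ → S0 → EuclideanSpace ℝ (Fin l) → SubProb S → ℝ)
    (P0 : ℕ → W → EuclideanSpace ℝ (Fin l) → SubProb S → W → ℝ)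
    (g0 : S0 → SubProb S → ℝ)
    -- Assumption A1 for the major kernel (as a transition mass function on the finite
    -- set W): values in [0,1], total mass one, continuity in (a,m) on A × 𝒫^sub(S),
    -- and uniform Lipschitz continuity in the action
    (hP0range : ∀ t u a mm u', P0 t u a mm u' ∈ Set.Icc (0 : ℝ) 1)
    (hP0sum : ∀ t u a mm, (∑ u' : W, P0 t u a mm u') = 1)
    (hP0cont : ∀ t u u', ContinuousOn
      (fun z : EuclideanSpace ℝ (Fin l) × SubProb S => P0 t u z.1 z.2 u')
      (Aset ×ˢ (Set.univ : Set (SubProb S))))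
    (hP0Lip : ∃ K : NNReal, ∀ t u u' mm,
      LipschitzOnWith K (fun a => P0 t u a mm u') Aset)
    -- Assumption A2: continuity of f⁰ in (a,m), uniform Lipschitz continuity in the
    -- action, and continuity of g⁰ in m
    (hf0cont : ∀ t x, ContinuousOn
      (fun z : EuclideanSpace ℝ (Fin l) × SubProb S => f0 t x z.1 z.2)
      (Aset ×ˢ (Set.univ : Set (SubProb S))))
    (hf0Lip : ∃ K : NNReal, ∀ t x mm, LipschitzOnWith K (fun a => f0 t x a mm) Aset)
    (hg0cont : ∀ x, Continuous fun mm : SubProb S => g0 x mm)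
    (μT : W → SubProb S) (m : ℕ → W → SubProb S) :
    ∃ κ1 κ2 : ℝ, 0 < κ1 ∧ 0 < κ2 ∧ ∃ lam0 : ℝ, 0 < lam0 ∧
      ∀ lam : ℝ, 0 < lam → lam ≤ lam0 → ∀ t < T, ∀ u : W,
        |entGibbs T Aset Ψ f0 P0 g0 μT m lam t u| ≤
          κ1 + κ2 * |Real.log lam| +
            (l : ℝ) * Real.log (1 + ⨆ u' : W, |Vlam T Aset Ψ f0 P0 g0 μT m lam (t + 1) u'|) := by

  classical
  obtain ⟨θ, hθ, ι, hι, hιle, hcone⟩ := hAcone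
  obtain ⟨Kf, hKf⟩ := hf0Lip
  obtain ⟨KP, hKP⟩ := hP0Lip
  set c : ℝ := Real.cos ι with hcdef
  have hc0 : 0 ≤ c := Real.cos_nonneg_of_mem_Icc ⟨by linarith [Real.pi_pos], hιle⟩
  have hc1 : c < 1 := by
    have h := Real.cos_lt_cos_of_nonneg_of_le_pi (le_refl 0) (by linarith [Real.pi_pos]) hι
    simpa [hcdef] using h
  set ρ : ℝ := (1 - c) / (2 * (1 + c)) with hρdef
  have hρpos : 0 < ρ := div_pos (by linarith only [hc1]) (by linarith only [hc0])
  have hρhalf : ρ ≤ 1 / 2 := by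
    rw [hρdef, div_le_div_iff₀ (by linarith only [hc0]) (by norm_num)]
    linarith only [hc0]
  have hρid : ρ * (1 + c) = (1 - c) / 2 := by
    rw [hρdef]; field_simp
  set b : ℝ := (volume (Metric.ball (0 : EuclideanSpace ℝ (Fin l)) 1)).toReal with hbdef
  have hbpos : 0 < b :=
    ENNReal.toReal_pos (Metric.measure_ball_pos _ _ one_pos).ne' measure_ball_lt_top.ne
  set VA : ℝ := (volume Aset).toReal with hVAdef
  have hVApos : 0 < VA := ENNReal.toReal_pos hALeb.ne' hAcompact.measure_lt_top.ne
  set cW : ℝ := (Fintype.card W : ℝ) with hcW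
  have hcW0 : 0 ≤ cW := Nat.cast_nonneg _
  refine ⟨(Kf : ℝ) + cW * KP + |Real.log b| + l * |Real.log ρ| + |Real.log VA| + 1,
    (l : ℝ) + 1, by positivity, by positivity, min 1 (θ / 2),
    lt_min one_pos (by linarith only [hθ]), ?_⟩
  intro lam hlam hlam0 t ht u
  have hlam1 : lam ≤ 1 := hlam0.trans (min_le_left _ _)
  have hlamθ : lam ≤ θ / 2 := hlam0.trans (min_le_right _ _)
  set M : ℝ := ⨆ u' : W, |Vlam T Aset Ψ f0 P0 g0 μT m lam (t + 1) u'| with hMdef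
  have hle_M : ∀ u' : W, |Vlam T Aset Ψ f0 P0 g0 μT m lam (t + 1) u'| ≤ M := by
    intro u'
    rw [hMdef]
    exact le_ciSup (f := fun u'' : W => |Vlam T Aset Ψ f0 P0 g0 μT m lam (t + 1) u''|)
      (Set.Finite.bddAbove (Set.finite_range _)) u'
  have hM0 : 0 ≤ M := (abs_nonneg _).trans (hle_M (Classical.arbitrary W))
  have hM1 : (0:ℝ) < 1 + M := by linarith only [hM0]
  set V1 : W → ℝ := fun u' => Vlam T Aset Ψ f0 P0 g0 μT m lam (t + 1) u' with hV1
  set G : EuclideanSpace ℝ (Fin l) → ℝ :=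
    fun a => f0 t (Ψ t u) a (m t u) + ∑ u' : W, V1 u' * P0 t u a (m t u) u' with hGdef
  -- continuity of G on Aset
  have hf0c : ContinuousOn (fun a : EuclideanSpace ℝ (Fin l) => f0 t (Ψ t u) a (m t u)) Aset := by
    have hmap : Set.MapsTo (fun a : EuclideanSpace ℝ (Fin l) => (a, m t u)) Aset
        (Aset ×ˢ (Set.univ : Set (SubProb S))) := fun a ha => ⟨ha, trivial⟩
    exact (hf0cont t (Ψ t u)).comp
      ((continuous_id.prodMk continuous_const).continuousOn) hmap
  have hPc : ∀ u' : W, ContinuousOn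
      (fun a : EuclideanSpace ℝ (Fin l) => P0 t u a (m t u) u') Aset := by
    intro u'
    have hmap : Set.MapsTo (fun a : EuclideanSpace ℝ (Fin l) => (a, m t u)) Aset
        (Aset ×ˢ (Set.univ : Set (SubProb S))) := fun a ha => ⟨ha, trivial⟩
    exact (hP0cont t u u').comp
      ((continuous_id.prodMk continuous_const).continuousOn) hmap
  have hGcont : ContinuousOn G Aset := by
    apply hf0c.add
    exact continuousOn_finset_sum _ (fun u' _ => continuousOn_const.mul (hPc u'))
  -- Lipschitz-type estimate for G
  set L : ℝ := (Kf : ℝ) + cW * KP * M with hLdef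
  have hL0 : 0 ≤ L := by positivity
  have hGlip : ∀ x ∈ Aset, ∀ y ∈ Aset, G x - G y ≤ L * dist x y := by
    intro x hx y hy
    have h1 : f0 t (Ψ t u) x (m t u) - f0 t (Ψ t u) y (m t u) ≤ (Kf : ℝ) * dist x y := by
      have h := (hKf t (Ψ t u) (m t u)).dist_le_mul x hx y hy
      rw [Real.dist_eq] at h
      exact (le_abs_self _).trans h
    have h2 : ∀ u' : W, V1 u' * P0 t u x (m t u) u' - V1 u' * P0 t u y (m t u) u'
        ≤ M * ((KP : ℝ) * dist x y) := by
      intro u'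
      have hd : |P0 t u x (m t u) u' - P0 t u y (m t u) u'| ≤ (KP : ℝ) * dist x y := by
        have h := (hKP t u u' (m t u)).dist_le_mul x hx y hy
        rwa [Real.dist_eq] at h
      calc V1 u' * P0 t u x (m t u) u' - V1 u' * P0 t u y (m t u) u'
          = V1 u' * (P0 t u x (m t u) u' - P0 t u y (m t u) u') := by ring
        _ ≤ |V1 u' * (P0 t u x (m t u) u' - P0 t u y (m t u) u')| := le_abs_self _
        _ = |V1 u'| * |P0 t u x (m t u) u' - P0 t u y (m t u) u'| := abs_mul _ _
        _ ≤ M * ((KP : ℝ) * dist x y) :=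
            mul_le_mul (hle_M u') hd (abs_nonneg _) hM0
    have h3 : ∑ u' : W, (V1 u' * P0 t u x (m t u) u' - V1 u' * P0 t u y (m t u) u')
        ≤ cW * (M * ((KP : ℝ) * dist x y)) := by
      calc ∑ u' : W, (V1 u' * P0 t u x (m t u) u' - V1 u' * P0 t u y (m t u) u')
          ≤ ∑ _u' : W, M * ((KP : ℝ) * dist x y) := Finset.sum_le_sum (fun u' _ => h2 u')
        _ = cW * (M * ((KP : ℝ) * dist x y)) := by
            rw [Finset.sum_const, nsmul_eq_mul, hcW]; simp
    have h4 : G x - G y = (f0 t (Ψ t u) x (m t u) - f0 t (Ψ t u) y (m t u))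
        + ∑ u' : W, (V1 u' * P0 t u x (m t u) u' - V1 u' * P0 t u y (m t u) u') := by
      rw [hGdef]; rw [Finset.sum_sub_distrib]; ring
    rw [h4, hLdef]; linarith only [h1, h3]
  -- maximizer and cone
  obtain ⟨astar, hastar, hmax⟩ := hAcompact.exists_isMaxOn hAne hGcont
  obtain ⟨v, hv, hvsub⟩ := hcone astar hastar
  set r : ℝ := lam / (1 + M) with hrdef
  have hrpos : 0 < r := div_pos hlam hM1
  have hrlam : r ≤ lam := by
    rw [hrdef, div_le_iff₀ hM1]; nlinarith only [mul_nonneg hlam.le hM0]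
  have hrθ : r ≤ θ / 2 := hrlam.trans hlamθ
  set s : ℝ := ρ * r with hsdef
  have hspos : 0 < s := mul_pos hρpos hrpos
  have hsr : s ≤ r / 2 := by
    rw [hsdef]
    nlinarith only [mul_le_mul_of_nonneg_right hρhalf hrpos.le, hrpos.le]
  set ctr : EuclideanSpace ℝ (Fin l) := astar + (r / 2) • v with hctr
  have hdctr : dist ctr astar = r / 2 := by
    rw [hctr, dist_eq_norm]
    simp [norm_smul, hv, abs_of_nonneg hrpos.le]
  have hball : Metric.closedBall ctr s ⊆ Aset := by
    intro x hx
    rw [Metric.mem_closedBall] at hx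
    apply hvsub
    have hxd : dist x astar ≤ s + r / 2 := by
      calc dist x astar ≤ dist x ctr + dist ctr astar := dist_triangle _ _ _
        _ ≤ s + r / 2 := by rw [hdctr]; linarith only [hx]
    have hxs : x - astar = (x - ctr) + (r / 2) • v := by
      rw [hctr]; abel
    constructor
    · -- dist x astar < θ
      have : s + r / 2 ≤ r := by linarith only [hsr]
      calc dist x astar ≤ s + r / 2 := hxd
        _ ≤ r := this
        _ < θ := by linarith only [hrθ, hθ]
    · -- cone inequality
      have hnx : ‖x - astar‖ ≤ s + r / 2 := by rw [← dist_eq_norm]; exact hxd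
      have hCS : |(inner ℝ (x - ctr) v : ℝ)| ≤ s := by
        calc |(inner ℝ (x - ctr) v : ℝ)| ≤ ‖x - ctr‖ * ‖v‖ := abs_real_inner_le_norm _ _
          _ ≤ s := by rw [hv, mul_one, ← dist_eq_norm]; exact hx
      have hinner : (r / 2 : ℝ) - s ≤ (inner ℝ (x - astar) v : ℝ) := by
        rw [hxs, inner_add_left, real_inner_smul_left]
        have hvv : (inner ℝ v v : ℝ) = 1 := by
          rw [real_inner_self_eq_norm_mul_norm, hv]; norm_num
        rw [hvv, mul_one]
        have := abs_le.mp hCS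
        linarith only [this.1]
      calc ‖x - astar‖ * c ≤ (s + r / 2) * c := by
            apply mul_le_mul_of_nonneg_right hnx hc0
        _ ≤ r / 2 - s := by
            rw [hsdef]
            have key : r * (ρ * (1 + c)) = r * ((1 - c) / 2) := by rw [hρid]
            linarith only [key]
        _ ≤ (inner ℝ (x - astar) v : ℝ) := hinner
  -- integrals
  have hAmeas : MeasurableSet Aset := hAcompact.isClosed.measurableSet
  set e : EuclideanSpace ℝ (Fin l) → ℝ := fun a => Real.exp (G a / lam) with hedef
  have hecont : ContinuousOn e Aset := Real.continuous_exp.comp_continuousOn (hGcont.div_const lam)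
  have heint : IntegrableOn e Aset := hecont.integrableOn_compact hAcompact
  set Z : ℝ := ∫ a in Aset, e a with hZdef
  set B : Set (EuclideanSpace ℝ (Fin l)) := Metric.closedBall ctr s with hB
  have hBmeas : MeasurableSet B := measurableSet_closedBall
  have hBint : IntegrableOn e B := heint.mono_set hball
  have hGB : ∀ x ∈ B, Real.exp ((G astar - L * r) / lam) ≤ e x := by
    intro x hxB
    have hxA : x ∈ Aset := hball hxB
    have hd : dist astar x ≤ r := by
      calc dist astar x = dist x astar := dist_comm _ _
        _ ≤ dist x ctr + dist ctr astar := dist_triangle _ _ _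
        _ ≤ r := by
            rw [hdctr]
            have := Metric.mem_closedBall.mp hxB
            linarith only [this, hsr]
    have hlip := hGlip astar hastar x hxA
    have hGx : G astar - L * r ≤ G x := by
      linarith only [hlip, mul_le_mul_of_nonneg_left hd hL0]
    rw [hedef]
    exact Real.exp_le_exp.mpr ((div_le_div_iff_of_pos_right hlam).mpr hGx)
  have hvolBpos : 0 < (volume B).toReal :=
    ENNReal.toReal_pos (Metric.measure_closedBall_pos volume ctr hspos).ne' measure_closedBall_lt_top.ne
  have hZlb : (volume B).toReal * Real.exp ((G astar - L * r) / lam) ≤ Z := by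
    have h1 : ∫ _a in B, Real.exp ((G astar - L * r) / lam) ≤ ∫ a in B, e a :=
      setIntegral_mono_on (integrableOn_const measure_closedBall_lt_top.ne)
        hBint hBmeas hGB
    rw [setIntegral_const, smul_eq_mul, measureReal_def] at h1
    have h2 : ∫ a in B, e a ≤ Z := by
      rw [hZdef]
      exact setIntegral_mono_set heint
        (Filter.Eventually.of_forall (fun a => (Real.exp_pos _).le))
        (HasSubset.Subset.eventuallyLE hball)
    linarith only [h1, h2]
  have hZpos : 0 < Z := lt_of_lt_of_le (mul_pos hvolBpos (Real.exp_pos _)) hZlb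
  have hvolBeq : (volume B).toReal = s ^ l * b := by
    rw [hB, Measure.addHaar_closedBall volume ctr hspos.le, ENNReal.toReal_mul,
      ENNReal.toReal_ofReal (by positivity), hbdef]
    congr 2
    exact finrank_euclideanSpace_fin
  have hlogZ : (l : ℝ) * Real.log s + Real.log b + (G astar - L * r) / lam ≤ Real.log Z := by
    have h := Real.log_le_log (mul_pos hvolBpos (Real.exp_pos _)) hZlb
    rw [Real.log_mul hvolBpos.ne' (Real.exp_ne_zero _), Real.log_exp, hvolBeq,
      Real.log_mul (pow_ne_zero _ hspos.ne') hbpos.ne', Real.log_pow] at h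
    linarith only [h]
  -- density facts
  have hφeq : ∀ a, gibbsDensity T Aset Ψ f0 P0 g0 μT m lam t u a = e a / Z := fun a => rfl
  have hφpos : ∀ a, 0 < e a / Z := fun a => div_pos (Real.exp_pos _) hZpos
  have hφcont : ContinuousOn (fun a => e a / Z) Aset := hecont.div_const Z
  have hφint : IntegrableOn (fun a => e a / Z) Aset := heint.div_const Z
  have hφone : (∫ a in Aset, e a / Z) = 1 := by
    rw [integral_div, hZdef]
    exact div_self hZpos.ne'
  have heGint : IntegrableOn (fun a => e a / Z * G a) Aset :=
    ((hecont.div_const Z).mul hGcont).integrableOn_compact hAcompact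
  have hlogφ : ∀ a, Real.log (e a / Z) = G a / lam - Real.log Z := by
    intro a
    rw [div_eq_mul_inv, Real.log_mul (Real.exp_ne_zero _) (inv_ne_zero hZpos.ne'),
      Real.log_exp, Real.log_inv]
    ring
  have hentdef : entGibbs T Aset Ψ f0 P0 g0 μT m lam t u
      = -∫ a in Aset, e a / Z * Real.log (e a / Z) := rfl
  have hent : entGibbs T Aset Ψ f0 P0 g0 μT m lam t u
      = Real.log Z - (∫ a in Aset, e a / Z * G a) / lam := by
    rw [hentdef]
    have h2 : (∫ a in Aset, e a / Z * Real.log (e a / Z))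
        = ∫ a in Aset, ((e a / Z * G a) / lam - (e a / Z) * Real.log Z) := by
      apply setIntegral_congr_fun hAmeas
      intro a _
      simp only [hlogφ a]
      ring
    rw [h2, integral_sub (heGint.div_const lam) (hφint.mul_const _),
      integral_div, integral_mul_const, hφone, one_mul]
    ring
  -- upper bound on entropy
  have hHub : entGibbs T Aset Ψ f0 P0 g0 μT m lam t u ≤ Real.log VA := by
    have hpt : ∀ a ∈ Aset, -(e a / Z * Real.log (e a / Z))
        ≤ 1 / VA - e a / Z + (e a / Z) * Real.log VA := by
      intro a _
      have hφa : 0 < e a / Z := hφpos a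
      have h := Real.log_le_sub_one_of_pos (show 0 < 1 / (e a / Z * VA) by positivity)
      rw [one_div, Real.log_inv, Real.log_mul hφa.ne' hVApos.ne'] at h
      have hid : (e a / Z) * (e a / Z * VA)⁻¹ = 1 / VA := by
        field_simp
        exact div_self (Real.exp_pos _).ne'
      linarith only [mul_le_mul_of_nonneg_left h hφa.le, hid]
    have hlogcont : ContinuousOn (fun a => e a / Z * Real.log (e a / Z)) Aset :=
      hφcont.mul (hφcont.log (fun a _ => (hφpos a).ne'))
    have hint1 : IntegrableOn (fun a => e a / Z * Real.log (e a / Z)) Aset :=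
      hlogcont.integrableOn_compact hAcompact
    have hint2 : IntegrableOn (fun a => 1 / VA - e a / Z + (e a / Z) * Real.log VA) Aset := by
      exact ((integrableOn_const hAcompact.measure_lt_top.ne).sub hφint).add
        (hφint.mul_const _)
    have hmono := setIntegral_mono_on (f := fun a => -(e a / Z * Real.log (e a / Z)))
      hint1.neg hint2 hAmeas hpt
    rw [integral_neg] at hmono
    have hrhs : (∫ a in Aset, (1 / VA - e a / Z + (e a / Z) * Real.log VA))
        = Real.log VA := by
      have iconst : IntegrableOn (fun _ : EuclideanSpace ℝ (Fin l) => 1 / VA) Aset :=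
        integrableOn_const hAcompact.measure_lt_top.ne
      have i1 : IntegrableOn (fun a => 1 / VA - e a / Z) Aset := iconst.sub hφint
      have i2 : IntegrableOn (fun a => e a / Z * Real.log VA) Aset := hφint.mul_const _
      rw [integral_add i1 i2, integral_sub iconst hφint,
        setIntegral_const, smul_eq_mul, measureReal_def, integral_mul_const, hφone, one_mul, ← hVAdef]
      field_simp
      ring
    rw [hrhs] at hmono
    rw [hentdef]
    exact hmono
  -- lower bound on entropy
  have hφGle : (∫ a in Aset, e a / Z * G a) ≤ G astar := by
    have h1 : (∫ a in Aset, e a / Z * G a) ≤ ∫ a in Aset, e a / Z * G astar :=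
      setIntegral_mono_on heGint (hφint.mul_const _) hAmeas
        (fun a ha => mul_le_mul_of_nonneg_left (hmax ha) (hφpos a).le)
    rwa [integral_mul_const, hφone, one_mul] at h1
  have hLr : L * r / lam ≤ (Kf : ℝ) + cW * KP := by
    have hrw : L * r / lam = L / (1 + M) := by
      rw [hrdef]; field_simp
    rw [hrw, div_le_iff₀ hM1, hLdef]
    have hKP0 : (0:ℝ) ≤ (KP : ℝ) := KP.coe_nonneg
    have hKf0 : (0:ℝ) ≤ (Kf : ℝ) := Kf.coe_nonneg
    linarith only [mul_nonneg hKf0 hM0, mul_nonneg hcW0 hKP0]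
  have hHlb : (l : ℝ) * Real.log s + Real.log b - ((Kf : ℝ) + cW * KP)
      ≤ entGibbs T Aset Ψ f0 P0 g0 μT m lam t u := by
    rw [hent]
    have h1 : (∫ a in Aset, e a / Z * G a) / lam ≤ G astar / lam :=
      (div_le_div_iff_of_pos_right hlam).mpr hφGle
    rw [sub_div] at hlogZ
    linarith only [hlogZ, h1, hLr]
  -- assemble
  have hlogs : Real.log s = Real.log ρ + (Real.log lam - Real.log (1 + M)) := by
    rw [hsdef, Real.log_mul hρpos.ne' hrpos.ne', hrdef,
      Real.log_div hlam.ne' hM1.ne']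
  have hloglam : Real.log lam = -|Real.log lam| := by
    rw [abs_of_nonpos (Real.log_nonpos hlam.le hlam1)]; ring
  have hlogM : 0 ≤ Real.log (1 + M) := Real.log_nonneg (by linarith only [hM0])
  have hl0 : (0:ℝ) ≤ (l : ℝ) := Nat.cast_nonneg _
  rw [abs_le]
  constructor
  · have e1 : (l : ℝ) * Real.log ρ ≥ (l : ℝ) * (-|Real.log ρ|) :=
      mul_le_mul_of_nonneg_left (neg_abs_le _) hl0
    have e2 : (l : ℝ) * |Real.log lam| ≤ ((l : ℝ) + 1) * |Real.log lam| := by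
      linarith only [abs_nonneg (Real.log lam), hl0]
    have e3 : Real.log b ≥ -|Real.log b| := neg_abs_le _
    have := hHlb
    rw [hlogs, hloglam] at this
    have hexp : (l : ℝ) * (Real.log ρ + (-|Real.log lam| - Real.log (1 + M)))
        = (l : ℝ) * Real.log ρ - (l : ℝ) * |Real.log lam| - (l : ℝ) * Real.log (1 + M) := by
      ring
    rw [hexp] at this
    have habs0 : 0 ≤ |Real.log VA| := abs_nonneg _
    linarith only [this, e1, e2, e3, habs0]
  · have h1 : Real.log VA ≤ |Real.log VA| := le_abs_self _
    have h2 : 0 ≤ ((l : ℝ) + 1) * |Real.log lam| := by positivity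
    have h3 : 0 ≤ (l : ℝ) * Real.log (1 + M) := mul_nonneg hl0 hlogM
    have habs1 : 0 ≤ |Real.log b| := abs_nonneg _
    have habs2 : 0 ≤ (l:ℝ) * |Real.log ρ| := by positivity
    have habs3 : (0:ℝ) ≤ (Kf : ℝ) + cW * KP := by positivity
    linarith only [hHub, h1, h2, h3, habs1, habs2, habs3]
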